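/- Let Y be a measurable space, μ₀ a probability measure on Y, and {K_x : x ∈ 𝒳} a family of Markov kernels from Y to Y indexed by a set 𝒳. Let D = (x₁,…,x_n) and D′ = (x′₁,…,x′_n) be two sequences in 𝒳ⁿ with x_t = x′_t for all t ≠ i and x_i ≠ x′_i, for some i ∈ {1,…,n}. Then for every γ ≥ 1, E_γ(μ₀K_{x₁}⋯K_{x_n} ‖ μ₀K_{x′₁}⋯K_{x′_n}) ≤ E_γ(μ_{i−1}K_{x_i} ‖ μ_{i−1}K_{x′_i}) · ∏_{t=i+1}^{n} η_γ(K_{x_t}), where μ_{i−1} := μ₀K_{x₁}⋯K_{x_{i−1}}. -/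

import Mathlib

open MeasureTheory ProbabilityTheory Real

noncomputable def Egamma {Y : Type*} [MeasurableSpace Y] (γ : ℝ) (P Q : Measure Y) : ℝ :=
  ⨆ A : {A : Set Y // MeasurableSet A}, ((P A.1).toReal - γ * (Q A.1).toReal)

noncomputable def etaGamma {Y : Type*} [MeasurableSpace Y] (γ : ℝ) (K : Kernel Y Y) : ℝ :=
  ⨆ p : {p : Measure Y × Measure Y //
      IsProbabilityMeasure p.1 ∧ IsProbabilityMeasure p.2 ∧ Egamma γ p.1 p.2 ≠ 0},
    Egamma γ (p.1.1.bind K) (p.1.2.bind K) / Egamma γ p.1.1 p.1.2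

/-- `runKernels μ [K₁, …, Kₙ] = μK₁⋯Kₙ`. -/
noncomputable def runKernels {Y : Type*} [MeasurableSpace Y]
    (μ : Measure Y) (Ks : List (Kernel Y Y)) : Measure Y :=
  Ks.foldl (fun ν K => ν.bind K) μ

section Helpers

variable {Y : Type*} [MeasurableSpace Y]

lemma egamma_bddAbove (γ : ℝ) (hγ : 0 ≤ γ) (P Q : Measure Y) [IsFiniteMeasure P] :
    BddAbove (Set.range fun A : {A : Set Y // MeasurableSet A} =>
      ((P A.1).toReal - γ * (Q A.1).toReal)) := by
  refine ⟨(P Set.univ).toReal, ?_⟩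
  rintro x ⟨A, rfl⟩
  dsimp only
  have h1 : (P A.1).toReal ≤ (P Set.univ).toReal :=
    ENNReal.toReal_mono (measure_ne_top _ _) (measure_mono (Set.subset_univ _))
  have h2 : (0:ℝ) ≤ (Q A.1).toReal := ENNReal.toReal_nonneg
  nlinarith

lemma le_Egamma (γ : ℝ) (hγ : 0 ≤ γ) (P Q : Measure Y) [IsFiniteMeasure P]
    {A : Set Y} (hA : MeasurableSet A) :
    (P A).toReal - γ * (Q A).toReal ≤ Egamma γ P Q :=
  le_ciSup (egamma_bddAbove γ hγ P Q) ⟨A, hA⟩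

lemma Egamma_nonneg (γ : ℝ) (hγ : 0 ≤ γ) (P Q : Measure Y) [IsFiniteMeasure P] :
    0 ≤ Egamma γ P Q := by
  have := le_Egamma γ hγ P Q MeasurableSet.empty
  simpa using this

lemma isProb_bind (μ : Measure Y) [IsProbabilityMeasure μ] (κ : Kernel Y Y)
    [IsMarkovKernel κ] : IsProbabilityMeasure (μ.bind κ) := by
  constructor
  rw [Measure.bind_apply MeasurableSet.univ κ.measurable.aemeasurable]
  simp

lemma bind_term_le (γ : ℝ) (hγ : 1 ≤ γ) (P Q : Measure Y)
    [IsProbabilityMeasure P] [IsProbabilityMeasure Q]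
    (K : Kernel Y Y) [IsMarkovKernel K] {A : Set Y} (hA : MeasurableSet A) :
    ((P.bind K) A).toReal - γ * ((Q.bind K) A).toReal ≤ Egamma γ P Q := by
  have hγ0 : (0:ℝ) ≤ γ := zero_le_one.trans hγ
  set lam : Measure Y := P + Q with hlam
  have hPlam : P ≪ lam := Measure.absolutelyContinuous_of_le (Measure.le_add_right le_rfl)
  have hQlam : Q ≪ lam := Measure.absolutelyContinuous_of_le (Measure.le_add_left le_rfl)
  set p : Y → ℝ := fun y => (P.rnDeriv lam y).toReal with hp
  set q : Y → ℝ := fun y => (Q.rnDeriv lam y).toReal with hq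
  have mp : Measurable p := (Measure.measurable_rnDeriv P lam).ennreal_toReal
  have mq : Measurable q := (Measure.measurable_rnDeriv Q lam).ennreal_toReal
  have hip : Integrable p lam := Measure.integrable_toReal_rnDeriv
  have hiq : Integrable q lam := Measure.integrable_toReal_rnDeriv
  set F : Y → ℝ := fun y => (K y A).toReal with hF
  have mF : Measurable F := (Kernel.measurable_coe K hA).ennreal_toReal
  have hF0 : ∀ y, 0 ≤ F y := fun y => ENNReal.toReal_nonneg
  have hF1 : ∀ y, F y ≤ 1 := by
    intro y
    have h1 : K y A ≤ 1 := prob_le_one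
    have := ENNReal.toReal_mono ENNReal.one_ne_top h1
    simpa using this
  have hFbdd : ∃ C, ∀ y, ‖F y‖ ≤ C := ⟨1, fun y => by
    rw [Real.norm_eq_abs, abs_of_nonneg (hF0 y)]; exact hF1 y⟩
  have key : ∀ (R : Measure Y), IsProbabilityMeasure R → R ≪ lam →
      ((R.bind K) A).toReal = ∫ y, (R.rnDeriv lam y).toReal * F y ∂lam := by
    intro R hR hRlam
    have h1 : (R.bind K) A = lintegral R (fun y => K y A) :=
      Measure.bind_apply hA K.measurable.aemeasurable
    have h2 : ((R.bind K) A).toReal = ∫ y, F y ∂ R := by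
      rw [h1, ← integral_toReal (Kernel.measurable_coe K hA).aemeasurable
        (ae_of_all _ fun y => lt_of_le_of_lt prob_le_one ENNReal.one_lt_top)]
    rw [h2, ← integral_rnDeriv_smul hRlam]
    simp [smul_eq_mul]
  have hPA : ((P.bind K) A).toReal = ∫ y, p y * F y ∂lam := key P inferInstance hPlam
  have hQA : ((Q.bind K) A).toReal = ∫ y, q y * F y ∂lam := key Q inferInstance hQlam
  have hipF : Integrable (fun y => p y * F y) lam := by
    simpa [mul_comm] using hip.bdd_mul mF.aestronglyMeasurable (ae_of_all _ hFbdd.choose_spec)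
  have hiqF : Integrable (fun y => q y * F y) lam := by
    simpa [mul_comm] using hiq.bdd_mul mF.aestronglyMeasurable (ae_of_all _ hFbdd.choose_spec)
  have hig : Integrable (fun y => p y - γ * q y) lam := hip.sub (hiq.const_mul γ)
  have higF : Integrable (fun y => (p y - γ * q y) * F y) lam := by
    simpa [mul_comm] using hig.bdd_mul mF.aestronglyMeasurable (ae_of_all _ hFbdd.choose_spec)
  have hsplit : ((P.bind K) A).toReal - γ * ((Q.bind K) A).toReal
      = ∫ y, (p y - γ * q y) * F y ∂lam := by
    rw [hPA, hQA, ← integral_const_mul, ← integral_sub hipF (hiqF.const_mul γ)]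
    congr 1
    funext y
    ring
  set B : Set Y := {y | γ * q y ≤ p y} with hB
  have hBm : MeasurableSet B := measurableSet_le (measurable_const.mul mq) mp
  have hind : Integrable (B.indicator fun y => p y - γ * q y) lam := hig.indicator hBm
  have hgF_le : ∀ y, (p y - γ * q y) * F y ≤ B.indicator (fun y => p y - γ * q y) y := by
    intro y
    by_cases hy : y ∈ B
    · rw [Set.indicator_of_mem hy]
      have hg0 : 0 ≤ p y - γ * q y := sub_nonneg.mpr hy
      exact mul_le_of_le_one_right hg0 (hF1 y)
    · rw [Set.indicator_of_notMem hy]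
      have hneg : p y - γ * q y < 0 := sub_neg.mpr (lt_of_not_ge hy)
      nlinarith [hF0 y]
  have hle : ∫ y, (p y - γ * q y) * F y ∂lam
      ≤ ∫ y, B.indicator (fun y => p y - γ * q y) y ∂lam :=
    integral_mono higF hind hgF_le
  have hIB : ∫ y, B.indicator (fun y => p y - γ * q y) y ∂lam
      = (P B).toReal - γ * (Q B).toReal := by
    rw [integral_indicator hBm,
      integral_sub hip.integrableOn ((hiq.const_mul γ).integrableOn), integral_const_mul,
      Measure.setIntegral_toReal_rnDeriv hPlam, Measure.setIntegral_toReal_rnDeriv hQlam]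
    rfl
  calc ((P.bind K) A).toReal - γ * ((Q.bind K) A).toReal
      = ∫ y, (p y - γ * q y) * F y ∂lam := hsplit
    _ ≤ ∫ y, B.indicator (fun y => p y - γ * q y) y ∂lam := hle
    _ = (P B).toReal - γ * (Q B).toReal := hIB
    _ ≤ Egamma γ P Q := le_Egamma γ hγ0 P Q hBm

lemma Egamma_bind_le (γ : ℝ) (hγ : 1 ≤ γ) (P Q : Measure Y)
    [IsProbabilityMeasure P] [IsProbabilityMeasure Q]
    (K : Kernel Y Y) [IsMarkovKernel K] :
    Egamma γ (P.bind K) (Q.bind K) ≤ Egamma γ P Q :=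
  ciSup_le fun A => bind_term_le γ hγ P Q K A.2

lemma etaGamma_nonneg (γ : ℝ) (hγ : 1 ≤ γ) (K : Kernel Y Y) [IsMarkovKernel K] :
    0 ≤ etaGamma γ K := by
  have hγ0 : (0:ℝ) ≤ γ := zero_le_one.trans hγ
  refine Real.iSup_nonneg ?_
  rintro ⟨⟨P', Q'⟩, h1, h2, h3⟩
  haveI := h1; haveI := h2
  haveI := isProb_bind P' K
  haveI := isProb_bind Q' K
  exact div_nonneg (Egamma_nonneg γ hγ0 _ _) (Egamma_nonneg γ hγ0 _ _)

lemma Egamma_bind_le_eta (γ : ℝ) (hγ : 1 ≤ γ) (P Q : Measure Y)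
    [IsProbabilityMeasure P] [IsProbabilityMeasure Q]
    (K : Kernel Y Y) [IsMarkovKernel K] :
    Egamma γ (P.bind K) (Q.bind K) ≤ etaGamma γ K * Egamma γ P Q := by
  have hγ0 : (0:ℝ) ≤ γ := zero_le_one.trans hγ
  by_cases h : Egamma γ P Q = 0
  · rw [h, mul_zero]
    exact (Egamma_bind_le γ hγ P Q K).trans_eq h
  · have he : 0 < Egamma γ P Q := (Egamma_nonneg γ hγ0 P Q).lt_of_ne (Ne.symm h)
    have hb : BddAbove (Set.range fun r : {r : Measure Y × Measure Y //
        IsProbabilityMeasure r.1 ∧ IsProbabilityMeasure r.2 ∧ Egamma γ r.1 r.2 ≠ 0} =>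
        Egamma γ (r.1.1.bind K) (r.1.2.bind K) / Egamma γ r.1.1 r.1.2) := by
      refine ⟨1, ?_⟩
      rintro x ⟨⟨⟨P', Q'⟩, h1, h2, h3⟩, rfl⟩
      haveI := h1; haveI := h2
      have he' : 0 < Egamma γ P' Q' := (Egamma_nonneg γ hγ0 P' Q').lt_of_ne (Ne.symm h3)
      exact (div_le_one he').mpr (Egamma_bind_le γ hγ P' Q' K)
    have hmem := le_ciSup hb (⟨(P, Q), inferInstance, inferInstance, h⟩ :
      {r : Measure Y × Measure Y //
        IsProbabilityMeasure r.1 ∧ IsProbabilityMeasure r.2 ∧ Egamma γ r.1 r.2 ≠ 0})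
    have := mul_le_mul_of_nonneg_right hmem he.le
    rwa [div_mul_cancel₀ _ h] at this

lemma isProb_runKernels (L : List (Kernel Y Y)) (h : ∀ κ ∈ L, IsMarkovKernel κ)
    (μ : Measure Y) [IsProbabilityMeasure μ] :
    IsProbabilityMeasure (runKernels μ L) := by
  induction L generalizing μ with
  | nil => simpa [runKernels] using ‹IsProbabilityMeasure μ›
  | cons κ L ih =>
    haveI := h κ List.mem_cons_self
    haveI := isProb_bind μ κ
    have := ih (fun κ' h' => h κ' (List.mem_cons_of_mem _ h')) (μ.bind κ)
    simpa [runKernels] using this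

lemma runKernels_take_succ (μ : Measure Y) {n : ℕ} (f : Fin n → Kernel Y Y)
    {j : ℕ} (hj : j < n) :
    runKernels μ ((List.ofFn f).take (j + 1))
      = (runKernels μ ((List.ofFn f).take j)).bind (f ⟨j, hj⟩) := by
  have h1 : (List.ofFn f)[j]? = some (f ⟨j, hj⟩) := by
    rw [List.getElem?_eq_getElem (by simpa using hj)]
    simp
  rw [List.take_succ, h1]
  simp [runKernels, List.foldl_append]

end Helpers

/-- For a family of Markov kernels `{K_x}` and neighboring datasets
`D, D'` differing only at coordinate `i`,
`E_γ(μ₀K_{x₁}⋯K_{xₙ} ‖ μ₀K_{x'₁}⋯K_{x'ₙ})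
  ≤ E_γ(μ_{i−1}K_{x_i} ‖ μ_{i−1}K_{x'_i}) · ∏_{t>i} η_γ(K_{x_t})`,
where `μ_{i−1} = μ₀K_{x₁}⋯K_{x_{i−1}}`. -/
theorem Egamma_iterative_sdpi {Y 𝒳 : Type*} [MeasurableSpace Y]
    (μ₀ : Measure Y) [IsProbabilityMeasure μ₀]
    (K : 𝒳 → Kernel Y Y) [∀ x, IsMarkovKernel (K x)]
    (n : ℕ) (D D' : Fin n → 𝒳) (i : Fin n)
    (hne : D i ≠ D' i) (heq : ∀ t, t ≠ i → D t = D' t)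
    (γ : ℝ) (hγ : 1 ≤ γ) :
    Egamma γ (runKernels μ₀ (List.ofFn fun t => K (D t)))
        (runKernels μ₀ (List.ofFn fun t => K (D' t)))
      ≤ Egamma γ
          ((runKernels μ₀ ((List.ofFn fun t => K (D t)).take i.val)).bind (K (D i)))
          ((runKernels μ₀ ((List.ofFn fun t => K (D t)).take i.val)).bind (K (D' i)))
        * ∏ t ∈ Finset.univ.filter (fun t => i < t), etaGamma γ (K (D t)) := by
  classical
  set LD : List (Kernel Y Y) := List.ofFn fun t => K (D t) with hLD
  set LD' : List (Kernel Y Y) := List.ofFn fun t => K (D' t) with hLD'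
  set B : ℝ := Egamma γ
      ((runKernels μ₀ (LD.take i.val)).bind (K (D i)))
      ((runKernels μ₀ (LD.take i.val)).bind (K (D' i))) with hBdef
  have hMarkov : ∀ κ ∈ LD, IsMarkovKernel κ := by
    intro κ hκ
    rw [hLD, List.mem_ofFn] at hκ
    obtain ⟨t, rfl⟩ := hκ
    infer_instance
  have hMarkov' : ∀ κ ∈ LD', IsMarkovKernel κ := by
    intro κ hκ
    rw [hLD', List.mem_ofFn] at hκ
    obtain ⟨t, rfl⟩ := hκ
    infer_instance
  -- the prefixes of length `i` agree
  have htake : LD'.take i.val = LD.take i.val := by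
    apply List.ext_getElem
    · simp [hLD, hLD']
    · intro m h1 h2
      have hm : m < i.val := by
        rw [hLD'] at h1
        simpa using h1
      have hmn : m < n := lt_of_lt_of_le hm (Nat.le_of_lt_succ (Nat.lt_succ_of_lt i.isLt))
      rw [List.getElem_take, List.getElem_take]
      simp only [hLD, hLD', List.getElem_ofFn]
      have hne' : (⟨m, hmn⟩ : Fin n) ≠ i := by
        intro hc
        have hcc : m = i.val := congrArg Fin.val hc
        omega
      rw [heq _ hne']
  have main : ∀ j, i.val + 1 ≤ j → j ≤ n →
      Egamma γ (runKernels μ₀ (LD.take j)) (runKernels μ₀ (LD'.take j))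
        ≤ B * ∏ t ∈ Finset.univ.filter (fun t : Fin n => i < t ∧ t.val < j),
            etaGamma γ (K (D t)) := by
    intro j hj
    induction j, hj using Nat.le_induction with
    | base =>
      intro hn
      have hin : i.val < n := i.isLt
      have h1 : runKernels μ₀ (LD.take (i.val + 1))
          = (runKernels μ₀ (LD.take i.val)).bind (K (D i)) := by
        rw [hLD, runKernels_take_succ μ₀ _ hin]
      have h2 : runKernels μ₀ (LD'.take (i.val + 1))
          = (runKernels μ₀ (LD.take i.val)).bind (K (D' i)) := by
        rw [hLD', runKernels_take_succ μ₀ _ hin]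
        rw [← hLD']
        rw [htake]
      have hfe : Finset.univ.filter (fun t : Fin n => i < t ∧ t.val < i.val + 1)
          = (∅ : Finset (Fin n)) := by
        ext t
        simp only [Finset.mem_filter, Finset.mem_univ, true_and, Finset.notMem_empty,
          iff_false, not_and, Fin.lt_def]
        omega
      rw [h1, h2, hfe, Finset.prod_empty, mul_one]
    | succ j hij ih =>
      intro hjn
      have hjn' : j < n := hjn
      have hprev := ih (le_of_lt hjn')
      haveI hprob1 : IsProbabilityMeasure (runKernels μ₀ (LD.take j)) :=
        isProb_runKernels _ (fun κ hκ => hMarkov κ (List.mem_of_mem_take hκ)) μ₀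
      haveI hprob2 : IsProbabilityMeasure (runKernels μ₀ (LD'.take j)) :=
        isProb_runKernels _ (fun κ hκ => hMarkov' κ (List.mem_of_mem_take hκ)) μ₀
      have hj : (⟨j, hjn'⟩ : Fin n) ≠ i := by
        intro hc
        have hcc : j = i.val := congrArg Fin.val hc
        omega
      have h1 : runKernels μ₀ (LD.take (j + 1))
          = (runKernels μ₀ (LD.take j)).bind (K (D ⟨j, hjn'⟩)) := by
        rw [hLD, runKernels_take_succ μ₀ _ hjn']
      have h2 : runKernels μ₀ (LD'.take (j + 1))
          = (runKernels μ₀ (LD'.take j)).bind (K (D ⟨j, hjn'⟩)) := by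
        rw [hLD', runKernels_take_succ μ₀ _ hjn', heq _ hj]
      have hstep := Egamma_bind_le_eta γ hγ (runKernels μ₀ (LD.take j))
        (runKernels μ₀ (LD'.take j)) (K (D ⟨j, hjn'⟩))
      have hinsert : Finset.univ.filter (fun t : Fin n => i < t ∧ t.val < j + 1)
          = insert (⟨j, hjn'⟩ : Fin n)
              (Finset.univ.filter (fun t : Fin n => i < t ∧ t.val < j)) := by
        ext t
        simp only [Finset.mem_filter, Finset.mem_univ, true_and, Finset.mem_insert,
          Fin.lt_def, Fin.ext_iff, Fin.val_mk]
        omega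
      have hnotmem : (⟨j, hjn'⟩ : Fin n) ∉
          Finset.univ.filter (fun t : Fin n => i < t ∧ t.val < j) := by
        simp
      rw [h1, h2, hinsert, Finset.prod_insert hnotmem]
      have h3 := mul_le_mul_of_nonneg_left hprev (etaGamma_nonneg γ hγ (K (D ⟨j, hjn'⟩)))
      exact hstep.trans (h3.trans_eq (by ring))
  have hfin := main n i.isLt le_rfl
  have hfull : LD.take n = LD := by
    rw [hLD]
    exact List.take_of_length_le (by simp)
  have hfull' : LD'.take n = LD' := by
    rw [hLD']
    exact List.take_of_length_le (by simp)
  have hfilter : Finset.univ.filter (fun t : Fin n => i < t ∧ t.val < n)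
      = Finset.univ.filter (fun t : Fin n => i < t) := by
    ext t
    simp [t.isLt]
  rw [hfull, hfull', hfilter] at hfin
  exact hfin
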